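/- For q = 2, the single edge K₂ is not a constraint graph: for every d ≥ 1 there exist an affine map f : ‖σ^{d+1}‖ → ℝ^d and an edge e of σ^{d+1} such that every Tverberg partition of f into 2 disjoint faces uses the edge e (i.e., some partition class contains both endpoints of e). -/

import Mathlib

open Finset

/-- Extract weights indexed by `Fin n` from membership in the convex hull of the image of a
finite index set under an injective map. -/
lemma exists_weights {n : ℕ} {E : Type*} [AddCommGroup E] [Module ℝ E] [DecidableEq E]
    (x : Fin n → E) (hx : Function.Injective x) (F : Finset (Fin n)) (p : E)
    (hp : p ∈ convexHull ℝ (x '' (F : Set (Fin n)))) :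
    ∃ a : Fin n → ℝ, (∀ i, 0 ≤ a i) ∧ (∀ i, i ∉ F → a i = 0) ∧
      ∑ i, a i = 1 ∧ ∑ i, a i • x i = p := by
  have himg : x '' (F : Set (Fin n)) = ((F.image x : Finset E) : Set E) := by
    simp [Finset.coe_image]
  rw [himg, Finset.mem_convexHull'] at hp
  obtain ⟨w, hw0, hw1, hwp⟩ := hp
  refine ⟨fun i => if i ∈ F then w (x i) else 0, ?_, ?_, ?_, ?_⟩
  · intro i
    by_cases hi : i ∈ F
    · simpa [hi] using hw0 (x i) (Finset.mem_image_of_mem x hi)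
    · simp [hi]
  · intro i hi; simp [hi]
  · rw [Finset.sum_ite_mem, Finset.univ_inter,
      ← Finset.sum_image (f := w) (g := x) (fun a _ b _ h => hx h)]
    exact hw1
  · have : ∑ i, (if i ∈ F then w (x i) else 0) • x i
        = ∑ i ∈ F, w (x i) • x i := by
      simp only [ite_smul, zero_smul]
      rw [Finset.sum_ite_mem, Finset.univ_inter]
    rw [this, ← Finset.sum_image (g := x) (f := fun y => w y • y) (fun a _ b _ h => hx h)]
    exact hwp

/-- For q = 2 the single edge K₂ is not a constraint graph: for every d ≥ 1
there is an affine map of σ^{d+1} to ℝ^d (given by a point configuration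
x : [d+2] → ℝ^d, sending a point of the simplex with weights w to ∑ w_j x_j)
and an edge {u, v} of σ^{d+1} such that every Tverberg partition of the map
into 2 disjoint faces uses the edge {u, v}. -/
theorem K2_not_constraint_graph_for_q_two (d : ℕ) (hd : 1 ≤ d) :
    ∃ x : Fin (d + 2) → EuclideanSpace ℝ (Fin d), ∃ u v : Fin (d + 2), u ≠ v ∧
      ∀ F₁ F₂ : Finset (Fin (d + 2)), Disjoint F₁ F₂ →
        (convexHull ℝ (x '' (F₁ : Set (Fin (d + 2)))) ∩
          convexHull ℝ (x '' (F₂ : Set (Fin (d + 2))))).Nonempty →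
        (u ∈ F₁ ∧ v ∈ F₁) ∨ (u ∈ F₂ ∧ v ∈ F₂) := by
  classical
  -- the configuration: x 0 = 0, x (k+1) = e_k for k < d, x (d+1) = barycenter of the others
  set ι : ℝ := ((d : ℝ) + 1)⁻¹ with hι
  have hιpos : 0 < ι := by positivity
  have hιlt : ι < 1 := by
    rw [hι]
    rw [inv_lt_one_iff₀]
    right
    have : (1:ℝ) ≤ (d:ℝ) := by exact_mod_cast hd
    linarith
  set e : Fin d → Fin (d + 2) := fun k => k.succ.castSucc with he
  set L : Fin (d + 2) := Fin.last (d + 1) with hL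
  have heL : ∀ k : Fin d, e k ≠ L := by
    intro k h
    have := congrArg Fin.val h
    simp [he, hL, Fin.val_last] at this
    omega
  have heinj : Function.Injective e := by
    intro a b h
    have := congrArg Fin.val h
    simp [he] at this
    exact Fin.ext (by omega)
  set x : Fin (d + 2) → EuclideanSpace ℝ (Fin d) :=
    fun i => WithLp.toLp 2 (fun k => (if i = e k then (1:ℝ) else 0) + (if i = L then ι else 0)) with hxdef
  -- key: value of x i at coordinate k
  have hxval : ∀ i k, x i k = (if i = e k then (1:ℝ) else 0) + (if i = L then ι else 0) :=
    fun i k => rfl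
  have hxinj : Function.Injective x := by
    intro i j h
    by_contra hij
    -- compare coordinates
    have hk : ∀ k, x i k = x j k := fun k => congrFun (congrArg WithLp.ofLp h) k
    -- classify i and j
    by_cases hiL : i = L
    · by_cases hjL : j = L
      · exact hij (hiL.trans hjL.symm)
      · -- i = L, j ≠ L
        by_cases hje : ∃ k, j = e k
        · obtain ⟨k, hk'⟩ := hje
          have := hk k
          rw [hxval, hxval, hiL, hk'] at this
          simp [heL k, (heL k).symm, hjL] at this
          linarith
        · push_neg at hje
          have := hk ⟨0, hd⟩
          rw [hxval, hxval, hiL] at this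
          simp [(heL ⟨0, hd⟩).symm, hje ⟨0, hd⟩, hjL] at this
          linarith
    · by_cases hjL : j = L
      · by_cases hie : ∃ k, i = e k
        · obtain ⟨k, hk'⟩ := hie
          have := hk k
          rw [hxval, hxval, hjL, hk'] at this
          simp [heL k, (heL k).symm, hiL] at this
          linarith
        · push_neg at hie
          have := hk ⟨0, hd⟩
          rw [hxval, hxval, hjL] at this
          simp [(heL ⟨0, hd⟩).symm, hie ⟨0, hd⟩, hiL] at this
          linarith
      · -- neither is L
        by_cases hie : ∃ k, i = e k
        · obtain ⟨k, hk'⟩ := hie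
          by_cases hje : j = e k
          · exact hij (hk'.trans hje.symm)
          · have h1 := hk k
            rw [hxval, hxval, if_pos hk', if_neg hiL, if_neg hje, if_neg hjL] at h1
            norm_num at h1
        · push_neg at hie
          by_cases hje : ∃ k, j = e k
          · obtain ⟨k, hk'⟩ := hje
            have h1 := hk k
            rw [hxval, hxval, if_neg (hie k), if_neg hiL, if_pos hk', if_neg hjL] at h1
            norm_num at h1
          · -- both i, j are "index 0": i.val could only be 0
            push_neg at hje
            exfalso
            apply hij
            have hi0 : (i : ℕ) = 0 := by
              rcases Nat.eq_zero_or_pos (i : ℕ) with h0 | h0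
              · exact h0
              · exfalso
                rcases lt_or_ge (i : ℕ) (d + 1) with hlt | hge
                · exact (hie ⟨(i:ℕ) - 1, by omega⟩) (Fin.ext (by simp [he]; omega))
                · exact hiL (Fin.ext (by simp [hL]; omega))
            have hj0 : (j : ℕ) = 0 := by
              rcases Nat.eq_zero_or_pos (j : ℕ) with h0 | h0
              · exact h0
              · exfalso
                rcases lt_or_ge (j : ℕ) (d + 1) with hlt | hge
                · exact (hje ⟨(j:ℕ) - 1, by omega⟩) (Fin.ext (by simp [he]; omega))
                · exact hjL (Fin.ext (by simp [hL]; omega))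
            exact Fin.ext (hi0.trans hj0.symm)
  refine ⟨x, ⟨0, by omega⟩, e ⟨0, hd⟩, ?_, ?_⟩
  · intro h
    have := congrArg Fin.val h
    simp [he] at this
  intro F₁ F₂ hdisj ⟨p, hp₁, hp₂⟩
  obtain ⟨a, ha0, haF, ha1, hap⟩ := exists_weights x hxinj F₁ p hp₁
  obtain ⟨b, hb0, hbF, hb1, hbp⟩ := exists_weights x hxinj F₂ p hp₂
  set c : Fin (d + 2) → ℝ := fun i => a i - b i with hc
  have hcsum : ∑ i, c i = 0 := by
    simp [hc, Finset.sum_sub_distrib, ha1, hb1]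
  have hczero : ∑ i, c i • x i = 0 := by
    simp [hc, sub_smul, Finset.sum_sub_distrib, hap, hbp]
  -- coordinate equations
  have hcoord : ∀ k : Fin d, c (e k) + c L * ι = 0 := by
    intro k
    have h0 : (∑ i, c i • x i) k = 0 := by rw [hczero]; rfl
    have hsum : (∑ i, c i • x i) k = ∑ i, c i * x i k := by
      rw [WithLp.ofLp_sum, Finset.sum_apply]
      rfl
    rw [hsum] at h0
    have : ∑ i, c i * x i k
        = ∑ i, (c i * (if i = e k then (1:ℝ) else 0) + c i * (if i = L then ι else 0)) := by
      refine Finset.sum_congr rfl fun i _ => ?_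
      rw [hxval]; ring
    rw [this, Finset.sum_add_distrib] at h0
    simpa [Finset.sum_ite_eq', mul_ite] using h0
  set t : ℝ := c L with ht
  have hcmid : ∀ k : Fin d, c (e k) = -(t * ι) := by
    intro k
    linarith [hcoord k]
  -- compute c 0
  have hc0 : c ⟨0, by omega⟩ = -(t * ι) := by
    have hsplit : ∑ i, c i
        = c ⟨0, by omega⟩ + ((∑ k : Fin d, c (e k)) + t) := by
      rw [Fin.sum_univ_succ, Fin.sum_univ_castSucc, Fin.succ_last]
      simp only [Fin.succ_castSucc]
      rfl
    rw [hsplit] at hcsum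
    have hmid : ∑ k : Fin d, c (e k) = (d : ℝ) * (-(t * ι)) := by
      rw [Finset.sum_congr rfl fun k _ => hcmid k]
      simp [mul_comm]
    rw [hmid] at hcsum
    have hdι : (d : ℝ) * ι = 1 - ι := by
      rw [hι]; field_simp; ring
    have hdtι : (d : ℝ) * -(t * ι) = -(t - t * ι) := by
      have h' : (d : ℝ) * -(t * ι) = -(t * ((d : ℝ) * ι)) := by ring
      rw [h', hdι]; ring
    rw [hdtι] at hcsum
    linarith
  -- sign analysis
  have hsign_pos : ∀ i, 0 < c i → i ∈ F₁ := by
    intro i hi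
    by_contra h
    have : a i = 0 := haF i h
    have : c i ≤ 0 := by simp [hc, this]; exact hb0 i
    linarith
  have hsign_neg : ∀ i, c i < 0 → i ∈ F₂ := by
    intro i hi
    by_contra h
    have : b i = 0 := hbF i h
    have : 0 ≤ c i := by simp [hc, this]; exact ha0 i
    linarith
  rcases lt_trichotomy t 0 with htneg | htzero | htpos
  · -- c 0 > 0, c (e 0) > 0 : both in F₁
    left
    have h1 : 0 < c ⟨0, by omega⟩ := by rw [hc0]; nlinarith
    have h2 : 0 < c (e ⟨0, hd⟩) := by rw [hcmid]; nlinarith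
    exact ⟨hsign_pos _ h1, hsign_pos _ h2⟩
  · -- all c are zero, contradiction with ∑ a = 1
    exfalso
    have hcall : ∀ i, c i = 0 := by
      intro i
      rcases Nat.eq_zero_or_pos (i : ℕ) with h0 | h0
      · have : i = (⟨0, by omega⟩ : Fin (d + 2)) := Fin.ext h0
        rw [this, hc0, htzero]; ring
      · rcases lt_or_ge (i : ℕ) (d + 1) with hlt | hge
        · have : i = e ⟨(i : ℕ) - 1, by omega⟩ := Fin.ext (by simp [he]; omega)
          rw [this, hcmid, htzero]; ring
        · have : i = L := Fin.ext (by simp [hL]; omega)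
          rw [this, ← ht, htzero]
    have hae : ∀ i, a i = 0 := by
      intro i
      by_cases hi : i ∈ F₁
      · have hbz : b i = 0 := hbF i (Finset.disjoint_left.mp hdisj hi)
        have hci := hcall i
        have : a i - b i = 0 := hci
        linarith
      · exact haF i hi
    have h10 : (1:ℝ) = 0 := by rw [← ha1]; simp [hae]
    norm_num at h10
  · right
    have h1 : c ⟨0, by omega⟩ < 0 := by rw [hc0]; nlinarith
    have h2 : c (e ⟨0, hd⟩) < 0 := by rw [hcmid]; nlinarith
    exact ⟨hsign_neg _ h1, hsign_neg _ h2⟩
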